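/- Let G = GSO_10 over a field, with standard parabolic Q having Levi GL_3 × GSO_4 and unipotent radical U(Q). Let V be the subgroup of upper-triangular unipotent matrices generated by the root subgroups x_1(r) = I + r e'_{1,2}, x_2(r) = I + r e'_{2,5}, x_3(r) = I + r e'_{2,6} and the other root subgroups in the unipotent radical attached to the (GL_1² × GSO_6)-parabolic, with character ψ_{V,a}(v) = ψ(v_{1,2} + v_{2,5} + a v_{2,6}) for a ≠ 0. Then no Weyl group element w of G satisfies w x_i(r) w^{-1} ⊂ U(Q)^− \ [U(Q)^−, U(Q)^−] simultaneously for i = 1, 2, 3; consequently every double coset in Q \ G / V is non-admissible for ψ_{V,a}. -/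

import Mathlib

open Matrix

/-!
Non-admissibility of double cosets `Q \ GSO₁₀ / V` (Lemma 3 of the paper).

`G = GSO₁₀` is the split similitude orthogonal group of the antidiagonal form
`J₁₀` (0-indexed; the pairing sends an index `i` to `9 − i = Fin.rev i`).  The
Weyl elements of `G` are represented by the permutation matrices `P_w` for
permutations `w` of the 10 coordinates commuting with the mirror `i ↦ 9 − i`.
With `e'_{i,j} = e_{i,j} − e_{9−j,9−i}` (0-indexed), the three root subgroups
carrying the character `ψ_{V,a}` are `x₁(r) = I + r e'_{0,1}`,
`x₂(r) = I + r e'_{1,4}`, `x₃(r) = I + r e'_{1,5}`.  `Q` is the standard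
parabolic with Levi `GL₃ × GSO₄` (block sizes `3,4,3`), `U(Q)⁻` its opposite
unipotent radical.  Claims: no Weyl element `w` conjugates all three root
subgroups into `U(Q)⁻ ∖ [U(Q)⁻, U(Q)⁻]`; and for every `w`, at least one of
the three conjugated root subgroups lands in `Q`, i.e. every double coset is
non-admissible for `ψ_{V,a}`.
-/

/-- Block index for the `(3,4,3)` decomposition defining the parabolic `Q`. -/
def blkQ (i : Fin 10) : ℕ := if (i : ℕ) < 3 then 0 else if (i : ℕ) < 7 then 1 else 2

variable {F : Type*} [Field F]

/-- `e'_{i,j} = e_{i,j} − e_{9−j,9−i}`. -/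
def E' (F : Type*) [Field F] (i j : Fin 10) : Matrix (Fin 10) (Fin 10) F :=
  Matrix.single i j 1 - Matrix.single j.rev i.rev 1

/-- The three root subgroups on which `ψ_{V,a}` is nontrivial. -/
def xRoot (F : Type*) [Field F] : Fin 3 → F → Matrix (Fin 10) (Fin 10) F
  | 0, r => 1 + r • E' F 0 1
  | 1, r => 1 + r • E' F 1 4
  | 2, r => 1 + r • E' F 1 5

/-- The permutation matrix of a Weyl element. -/
def permMat (F : Type*) [Field F] (w : Equiv.Perm (Fin 10)) : Matrix (Fin 10) (Fin 10) F :=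
  Matrix.of fun i j => if w j = i then 1 else 0

/-- Membership in the parabolic `Q` (block upper triangular for `(3,4,3)`). -/
def memQ (M : Matrix (Fin 10) (Fin 10) F) : Prop :=
  ∀ i j, blkQ j < blkQ i → M i j = 0

/-- Membership in the opposite unipotent radical `U(Q)⁻`. -/
def memUQminus (M : Matrix (Fin 10) (Fin 10) F) : Prop :=
  ∀ i j, blkQ i ≤ blkQ j → M i j = (1 : Matrix (Fin 10) (Fin 10) F) i j

/-- Membership in the commutator subgroup `[U(Q)⁻, U(Q)⁻]` (entries only in the
far block `(2,0)`). -/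
def memCommUQminus (M : Matrix (Fin 10) (Fin 10) F) : Prop :=
  ∀ i j, ¬(blkQ i = 2 ∧ blkQ j = 0) → M i j = (1 : Matrix (Fin 10) (Fin 10) F) i j


/-- Left index of the `k`-th root pair. -/
def rootL : Fin 3 → Fin 10
  | 0 => 0 | 1 => 1 | 2 => 1

/-- Right index of the `k`-th root pair. -/
def rootR : Fin 3 → Fin 10
  | 0 => 1 | 1 => 4 | 2 => 5

lemma xRoot_eq (k : Fin 3) (r : F) : xRoot F k r = 1 + r • E' F (rootL k) (rootR k) := by
  fin_cases k <;> rfl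

lemma conj_apply (w : Equiv.Perm (Fin 10)) (M : Matrix (Fin 10) (Fin 10) F) (a b : Fin 10) :
    (permMat F w * M * (permMat F w)ᵀ) a b = M (w⁻¹ a) (w⁻¹ b) := by
  simp only [Matrix.mul_apply, Matrix.transpose_apply, permMat, Matrix.of_apply,
    Equiv.apply_eq_iff_eq_symm_apply, ite_mul, one_mul, zero_mul, mul_ite, mul_one, mul_zero,
    Finset.sum_ite_eq', Finset.mem_univ, if_true]
  rfl

lemma xRoot_apply (k : Fin 3) (r : F) (a b : Fin 10) :
    xRoot F k r a b = (if a = b then (1:F) else 0)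
      + r * ((if rootL k = a ∧ rootR k = b then 1 else 0)
        - (if (rootR k).rev = a ∧ (rootL k).rev = b then 1 else 0)) := by
  rw [xRoot_eq]
  simp only [Matrix.add_apply, Matrix.smul_apply, E', Matrix.sub_apply, Matrix.one_apply,
    Matrix.single, Matrix.of_apply, smul_eq_mul]

lemma blkQ_rev : ∀ i : Fin 10, blkQ i.rev = 2 - blkQ i := by decide

lemma blkQ_le : ∀ i : Fin 10, blkQ i ≤ 2 := by decide

/-- For every mirror-compatible Weyl element, one of the three root pairs is sent to a
non-descending pair of blocks. -/
lemma key (w : Equiv.Perm (Fin 10)) (hw : ∀ i, w i.rev = (w i).rev) :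
    ∃ k : Fin 3, blkQ (w (rootL k)) ≤ blkQ (w (rootR k)) := by
  by_cases h0 : blkQ (w 0) ≤ blkQ (w 1)
  · exact ⟨0, h0⟩
  by_cases h1 : blkQ (w 1) ≤ blkQ (w 4)
  · exact ⟨1, h1⟩
  refine ⟨2, ?_⟩
  have h5 : w (5 : Fin 10) = (w 4).rev := by
    have := hw 4
    rwa [show (Fin.rev 4 : Fin 10) = 5 by decide] at this
  show blkQ (w 1) ≤ blkQ (w 5)
  rw [h5, blkQ_rev _]
  have e0 := blkQ_le (w 0); have e1 := blkQ_le (w 1); have e4 := blkQ_le (w 4)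
  omega

theorem no_admissible_weyl_element_GSO10 :
    ∀ w : Equiv.Perm (Fin 10), (∀ i, w i.rev = (w i).rev) →
      -- (a) `w` does not put all three root subgroups inside
      --     `U(Q)⁻ ∖ [U(Q)⁻, U(Q)⁻]` …
      (¬ ∀ (k : Fin 3) (r : F), r ≠ 0 →
          memUQminus (permMat F w * xRoot F k r * (permMat F w)ᵀ) ∧
          ¬ memCommUQminus (permMat F w * xRoot F k r * (permMat F w)ᵀ)) ∧
      -- (b) … and consequently some conjugated root subgroup lies in `Q`,
      --     so the double coset of `w` is non-admissible for `ψ_{V,a}`.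
      (∃ k : Fin 3, ∀ r : F, memQ (permMat F w * xRoot F k r * (permMat F w)ᵀ)) := by
  intro w hw
  obtain ⟨k, hk⟩ := key w hw
  constructor
  · intro hall
    obtain ⟨hU, -⟩ := hall k 1 one_ne_zero
    have h := hU (w (rootL k)) (w (rootR k)) hk
    rw [conj_apply] at h
    simp only [Equiv.Perm.inv_def, Equiv.symm_apply_apply] at h
    rw [xRoot_apply] at h
    have hne : rootL k ≠ rootR k := by fin_cases k <;> decide
    have hne2 : ¬((rootR k).rev = rootL k ∧ (rootL k).rev = rootR k) := by
      fin_cases k <;> decide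
    have hne3 : w (rootL k) ≠ w (rootR k) := fun h => hne (w.injective h)
    rw [if_neg hne, if_pos ⟨rfl, rfl⟩, if_neg hne2, Matrix.one_apply_ne hne3] at h
    simp at h
  · refine ⟨k, fun r a b hab => ?_⟩
    rw [conj_apply, xRoot_apply]
    have hab' : w⁻¹ a ≠ w⁻¹ b := by
      intro h; rw [show a = b from w⁻¹.injective h] at hab; exact lt_irrefl _ hab
    rw [if_neg hab']
    have c1 : ¬(rootL k = w⁻¹ a ∧ rootR k = w⁻¹ b) := by
      rintro ⟨h1, h2⟩
      have ha : a = w (rootL k) := by rw [h1]; simp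
      have hb : b = w (rootR k) := by rw [h2]; simp
      rw [ha, hb] at hab; omega
    have c2 : ¬((rootR k).rev = w⁻¹ a ∧ (rootL k).rev = w⁻¹ b) := by
      rintro ⟨h1, h2⟩
      have ha : a = w ((rootR k).rev) := by rw [h1]; simp
      have hb : b = w ((rootL k).rev) := by rw [h2]; simp
      rw [ha, hb, hw, hw, blkQ_rev _, blkQ_rev _] at hab
      have := blkQ_le (w (rootL k)); have := blkQ_le (w (rootR k))
      omega
    rw [if_neg c1, if_neg c2]
    ring
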